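/- For a totally symmetric third-order tensor g on ℝ², there exists an angle θ such that both g₁₁₂(θ) = 0 and g₁₂₂(θ) = 0 if and only if μ := g₁₁₂² + g₁₂₂² - g₁₁₂ g₂₂₂ - g₁₂₂ g₁₁₁ = 0 (components at θ = 0). -/

import Mathlib

noncomputable section

/-- The standard orthonormal basis of ℝ². -/
def e : Fin 2 → (Fin 2 → ℝ) := fun i => Pi.single i 1

/-- The basis rotated by angle θ: k'₁ = cos θ k₁ + sin θ k₂, k'₂ = -sin θ k₁ + cos θ k₂. -/
def krot (θ : ℝ) : Fin 2 → (Fin 2 → ℝ) := fun α =>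
  if α = 0 then Real.cos θ • e 0 + Real.sin θ • e 1
  else (-Real.sin θ) • e 0 + Real.cos θ • e 1

/-- Third-order tensors on ℝ² as trilinear maps. -/
abbrev Tri := (Fin 2 → ℝ) →ₗ[ℝ] (Fin 2 → ℝ) →ₗ[ℝ] (Fin 2 → ℝ) →ₗ[ℝ] ℝ

/-- Total symmetry: invariance under all permutations of the arguments. -/
def Sym3 (g : Tri) : Prop :=
  (∀ x y z, g x y z = g y x z) ∧ (∀ x y z, g x y z = g x z y)

/-- The components g_{αβγ}(θ) = g(k'_α, k'_β, k'_γ) in the basis rotated by θ. -/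
def comp (g : Tri) (θ : ℝ) (α β γ : Fin 2) : ℝ := g (krot θ α) (krot θ β) (krot θ γ)

/-- Expansion of g₁₁₂(θ). -/
lemma compB_expand (g : Tri) (hg : Sym3 g) (θ : ℝ) :
    comp g θ 0 0 1 =
      -Real.sin θ * (Real.cos θ)^2 * g (e 0) (e 0) (e 0)
      + ((Real.cos θ)^3 - 2*Real.cos θ*(Real.sin θ)^2) * g (e 0) (e 0) (e 1)
      + (2*(Real.cos θ)^2*Real.sin θ - (Real.sin θ)^3) * g (e 0) (e 1) (e 1)
      + (Real.sin θ)^2 * Real.cos θ * g (e 1) (e 1) (e 1) := by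
  obtain ⟨h1, h2⟩ := hg
  have e100 : g (e 1) (e 0) (e 0) = g (e 0) (e 0) (e 1) := (h1 _ _ _).trans (h2 _ _ _)
  have e010 : g (e 0) (e 1) (e 0) = g (e 0) (e 0) (e 1) := h2 _ _ _
  have e110 : g (e 1) (e 1) (e 0) = g (e 0) (e 1) (e 1) := (h2 _ _ _).trans (h1 _ _ _)
  have e101 : g (e 1) (e 0) (e 1) = g (e 0) (e 1) (e 1) := h1 _ _ _
  simp only [comp, krot, show ((0:Fin 2) = 0) = True by simp, show ((1:Fin 2) = 0) = False by decide,
    if_true, if_false, map_add, map_smul, LinearMap.add_apply, LinearMap.smul_apply, smul_eq_mul]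
  rw [e100, e010, e110, e101]
  ring

/-- Expansion of g₁₂₂(θ). -/
lemma compC_expand (g : Tri) (hg : Sym3 g) (θ : ℝ) :
    comp g θ 0 1 1 =
      (Real.sin θ)^2 * Real.cos θ * g (e 0) (e 0) (e 0)
      + ((Real.sin θ)^3 - 2*Real.sin θ*(Real.cos θ)^2) * g (e 0) (e 0) (e 1)
      + ((Real.cos θ)^3 - 2*(Real.sin θ)^2*Real.cos θ) * g (e 0) (e 1) (e 1)
      + Real.sin θ * (Real.cos θ)^2 * g (e 1) (e 1) (e 1) := by
  obtain ⟨h1, h2⟩ := hg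
  have e100 : g (e 1) (e 0) (e 0) = g (e 0) (e 0) (e 1) := (h1 _ _ _).trans (h2 _ _ _)
  have e010 : g (e 0) (e 1) (e 0) = g (e 0) (e 0) (e 1) := h2 _ _ _
  have e110 : g (e 1) (e 1) (e 0) = g (e 0) (e 1) (e 1) := (h2 _ _ _).trans (h1 _ _ _)
  have e101 : g (e 1) (e 0) (e 1) = g (e 0) (e 1) (e 1) := h1 _ _ _
  simp only [comp, krot, show ((0:Fin 2) = 0) = True by simp, show ((1:Fin 2) = 0) = False by decide,
    if_true, if_false, map_add, map_smul, LinearMap.add_apply, LinearMap.smul_apply, smul_eq_mul]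
  rw [e100, e010, e110, e101]
  ring

lemma krot_zero : ∀ α, krot 0 α = e α := by
  intro α
  fin_cases α <;>
    simp [krot, show ((1:Fin 2) = 0) = False by decide]

lemma comp_zero (g : Tri) (α β γ : Fin 2) : comp g 0 α β γ = g (e α) (e β) (e γ) := by
  simp [comp, krot_zero]

/-- there exists θ with g₁₁₂(θ) = 0 and g₁₂₂(θ) = 0 iff
μ := g₁₁₂² + g₁₂₂² - g₁₁₂ g₂₂₂ - g₁₂₂ g₁₁₁ = 0 (components at θ = 0). -/
theorem stmt9 (g : Tri) (hg : Sym3 g) :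
    (∃ θ : ℝ, comp g θ 0 0 1 = 0 ∧ comp g θ 0 1 1 = 0) ↔
      (comp g 0 0 0 1)^2 + (comp g 0 0 1 1)^2
        - comp g 0 0 0 1 * comp g 0 1 1 1
        - comp g 0 0 1 1 * comp g 0 0 0 0 = 0 := by
  obtain ⟨a, ha⟩ : ∃ a, g (e 0) (e 0) (e 0) = a := ⟨_, rfl⟩
  obtain ⟨b, hb⟩ : ∃ b, g (e 0) (e 0) (e 1) = b := ⟨_, rfl⟩
  obtain ⟨c0, hc0⟩ : ∃ c0, g (e 0) (e 1) (e 1) = c0 := ⟨_, rfl⟩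
  obtain ⟨d, hd⟩ : ∃ d, g (e 1) (e 1) (e 1) = d := ⟨_, rfl⟩
  simp only [comp_zero, ha, hb, hc0, hd]
  constructor
  · rintro ⟨θ, hB0, hC0⟩
    rw [compB_expand g hg θ, ha, hb, hc0, hd] at hB0
    rw [compC_expand g hg θ, ha, hb, hc0, hd] at hC0
    set s := Real.sin θ
    set c := Real.cos θ
    have hpy : s^2 + c^2 = 1 := Real.sin_sq_add_cos_sq θ
    have key : b^2 + c0^2 - b*d - c0*a =
        (-s*c^2*a + (c^3 - 2*c*s^2)*b + (2*c^2*s - s^3)*c0 + s^2*c*d)^2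
        + (s^2*c*a + (s^3 - 2*s*c^2)*b + (c^3 - 2*s^2*c)*c0 + s*c^2*d)^2
        - (-s*c^2*a + (c^3 - 2*c*s^2)*b + (2*c^2*s - s^3)*c0 + s^2*c*d)
          * (-s^3*a + 3*s^2*c*b - 3*s*c^2*c0 + c^3*d)
        - (s^2*c*a + (s^3 - 2*s*c^2)*b + (c^3 - 2*s^2*c)*c0 + s*c^2*d)
          * (c^3*a + 3*c^2*s*b + 3*c*s^2*c0 + s^3*d) := by
      linear_combination
        (-(b^2 + c0^2 - b*d - c0*a) * ((s^2+c^2)^2 + (s^2+c^2) + 1)) * hpy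
    rw [key, hB0, hC0]
    ring
  · intro hmu
    by_cases hz : (a - 3*c0)^2 + (d - 3*b)^2 = 0
    · have h1 : a - 3*c0 = 0 := by nlinarith [sq_nonneg (a - 3*c0), sq_nonneg (d - 3*b)]
      have h2 : d - 3*b = 0 := by nlinarith [sq_nonneg (a - 3*c0), sq_nonneg (d - 3*b)]
      have hsum : b^2 + c0^2 = 0 := by
        linear_combination (-1/2)*hmu + (-(c0)/2)*h1 + (-(b)/2)*h2
      have hb0 : b = 0 := by nlinarith [sq_nonneg b, sq_nonneg c0]
      have hc00 : c0 = 0 := by nlinarith [sq_nonneg b, sq_nonneg c0]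
      refine ⟨0, ?_, ?_⟩ <;> rw [comp_zero]
      · rw [hb, hb0]
      · rw [hc0, hc00]
    · -- harmonic decomposition
      obtain ⟨al, hal⟩ : ∃ al, (a - 3*c0)/4 = al := ⟨_, rfl⟩
      obtain ⟨be, hbe⟩ : ∃ be, (d - 3*b)/4 = be := ⟨_, rfl⟩
      obtain ⟨p, hp⟩ : ∃ p, 3*(a + c0)/4 = p := ⟨_, rfl⟩
      obtain ⟨q, hq⟩ : ∃ q, 3*(b + d)/4 = q := ⟨_, rfl⟩
      have hr2 : al^2 + be^2 ≠ 0 := by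
        intro h
        apply hz
        have h16 : ((a - 3*c0)/4)^2 + ((d - 3*b)/4)^2 = 0 := by rw [hal, hbe, h]
        nlinarith [h16]
      obtain ⟨X, hX⟩ : ∃ X, (al*p + be*q)/(3*(al^2 + be^2)) = X := ⟨_, rfl⟩
      obtain ⟨Y, hY⟩ : ∃ Y, (al*q - be*p)/(3*(al^2 + be^2)) = Y := ⟨_, rfl⟩
      have hpq : p^2 + q^2 = 9*(al^2 + be^2) := by
        rw [← hp, ← hq, ← hal, ← hbe]
        linear_combination (-9/2 : ℝ) * hmu
      have hXY : X^2 + Y^2 = 1 := by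
        rw [← hX, ← hY]
        have h3 : 3*(al^2 + be^2) ≠ 0 := by
          intro h; exact hr2 (by linarith)
        field_simp
        linear_combination (al^2 + be^2) * hpq
      have hz0 : (Complex.I * Y + X : ℂ) ≠ 0 := by
        intro h
        have hre : ((Complex.I * (Y:ℝ) + (X:ℝ) : ℂ)).re = X := by simp
        have him : ((Complex.I * (Y:ℝ) + (X:ℝ) : ℂ)).im = Y := by simp
        rw [h] at hre him
        simp only [Complex.zero_re, Complex.zero_im] at hre him
        rw [← hre, ← him] at hXY
        norm_num at hXY
      have habs : ‖(Complex.I * Y + X : ℂ)‖ = 1 := by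
        rw [Complex.norm_def, Complex.normSq_apply]
        have : ((Complex.I * (Y:ℝ) + (X:ℝ) : ℂ)).re = X := by simp
        rw [this]
        have : ((Complex.I * (Y:ℝ) + (X:ℝ) : ℂ)).im = Y := by simp
        rw [this]
        rw [show X*X + Y*Y = X^2 + Y^2 by ring, hXY, Real.sqrt_one]
      obtain ⟨ψ, hψ⟩ : ∃ ψ, Complex.arg (Complex.I * Y + X) = ψ := ⟨_, rfl⟩
      have hco : Real.cos ψ = X := by
        rw [← hψ, Complex.cos_arg hz0, habs]
        simp
      have hsi : Real.sin ψ = Y := by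
        rw [← hψ, Complex.sin_arg, habs]
        simp
      obtain ⟨s, hs⟩ : ∃ s, Real.sin (ψ/4) = s := ⟨_, rfl⟩
      obtain ⟨c, hc⟩ : ∃ c, Real.cos (ψ/4) = c := ⟨_, rfl⟩
      have hpy : s^2 + c^2 = 1 := by rw [← hs, ← hc]; exact Real.sin_sq_add_cos_sq (ψ/4)
      have hcψ : Real.cos ψ = 2*(2*c^2 - 1)^2 - 1 := by
        have h4 : ψ = 2*(2*(ψ/4)) := by ring
        rw [h4, Real.cos_two_mul, Real.cos_two_mul, hc]
      have hsψ : Real.sin ψ = 2*(2*s*c)*(2*c^2 - 1) := by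
        have h4 : ψ = 2*(2*(ψ/4)) := by ring
        rw [h4, Real.sin_two_mul, Real.sin_two_mul, Real.cos_two_mul, hs, hc]
        try ring
      have hE1 : al*(2*(2*c^2 - 1)^2 - 1) - be*(2*(2*s*c)*(2*c^2 - 1)) = p/3 := by
        rw [← hcψ, ← hsψ, hco, hsi, ← hX, ← hY]
        field_simp
        ring
      have hE2 : al*(2*(2*s*c)*(2*c^2 - 1)) + be*(2*(2*c^2 - 1)^2 - 1) = q/3 := by
        rw [← hcψ, ← hsψ, hco, hsi, ← hX, ← hY]
        field_simp
        ring
      have haa : a = al + p := by rw [← hal, ← hp]; ring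
      have hbb : b = -be + q/3 := by rw [← hbe, ← hq]; ring
      have hcc : c0 = -al + p/3 := by rw [← hal, ← hp]; ring
      have hdd : d = be + q := by rw [← hbe, ← hq]; ring
      refine ⟨ψ/4, ?_, ?_⟩
      · rw [compB_expand g hg (ψ/4), ha, hb, hc0, hd, hs, hc, haa, hbb, hcc, hdd]
        linear_combination s*hE1 + (-c)*hE2
          + (q*c/3 - p*s/3 - be*c + 8*be*c^3 + al*s) * hpy
      · rw [compC_expand g hg (ψ/4), ha, hb, hc0, hd, hs, hc, haa, hbb, hcc, hdd]
        linear_combination (-c)*hE1 + (-s)*hE2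
          + (q*s/3 + p*c/3 - be*s - al*c + 8*al*c^3) * hpy
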